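/- Let f : [0,1] → [0,1] be continuous and q > 0 be such that the limits of (f(x) − f(x)²)/(x − x²)^q as x → 0⁺ and as x → 1⁻ exist. Then for every Hermitian matrix X with all eigenvalues in [0,1] and X ≠ X², the ratio ‖f(X) − f(X)²‖₂ / ‖X − X²‖₂^q is at most sup over x ∈ (0,1) of (f(x) − f(x)²)/(x − x²)^q (where the function is extended by continuity at 0 and 1). -/

import Mathlib

open Matrix Set Filter
set_option maxHeartbeats 1000000

/-- Spectral norm (operator 2-norm) of a complex matrix. -/
noncomputable def specNorm {n : ℕ} (A : Matrix (Fin n) (Fin n) ℂ) : ℝ :=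
  ‖(Matrix.toEuclideanLin A).toContinuousLinearMap‖

/-- The matrix function f(X) of a Hermitian matrix X, obtained by applying f : ℝ → ℝ to the
eigenvalues in the spectral decomposition. -/
noncomputable def hermFun {n : ℕ} {X : Matrix (Fin n) (Fin n) ℂ} (hX : X.IsHermitian)
    (f : ℝ → ℝ) : Matrix (Fin n) (Fin n) ℂ :=
  (hX.eigenvectorUnitary : Matrix (Fin n) (Fin n) ℂ) *
    Matrix.diagonal (fun i => (f (hX.eigenvalues i) : ℂ)) *
      star (hX.eigenvectorUnitary : Matrix (Fin n) (Fin n) ℂ)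

section Aux

open scoped Matrix.Norms.L2Operator

lemma specNorm_eq {n : ℕ} (A : Matrix (Fin n) (Fin n) ℂ) : specNorm A = ‖A‖ :=
  (Matrix.l2_opNorm_def A).symm

lemma unitary_conj_norm {n : ℕ} [Nonempty (Fin n)] (U : Matrix.unitaryGroup (Fin n) ℂ)
    (A : Matrix (Fin n) (Fin n) ℂ) :
    ‖(U : Matrix (Fin n) (Fin n) ℂ) * A * star (U : Matrix (Fin n) (Fin n) ℂ)‖ = ‖A‖ := by
  have hst : star (U : Matrix (Fin n) (Fin n) ℂ)
      = ((star U : Matrix.unitaryGroup (Fin n) ℂ) : Matrix (Fin n) (Fin n) ℂ) := rfl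
  rw [mul_assoc, CStarRing.norm_coe_unitary_mul U, hst,
    CStarRing.norm_mul_coe_unitary A (star U)]

lemma diag_norm_ge {n : ℕ} (d : Fin n → ℂ) (i : Fin n) : ‖d i‖ ≤ ‖Matrix.diagonal d‖ := by
  have h := Matrix.l2_opNorm_mulVec (Matrix.diagonal d) (EuclideanSpace.single i 1)
  have e1 : (EuclideanSpace.equiv (Fin n) ℂ).symm
        (Matrix.diagonal d *ᵥ (EuclideanSpace.single i 1))
      = d i • EuclideanSpace.single i (1 : ℂ) := by
    ext j
    by_cases hj : j = i <;>
      simp [Matrix.mulVec_diagonal, EuclideanSpace.single_apply, hj, EuclideanSpace.equiv]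
  rw [e1] at h
  simpa [norm_smul, EuclideanSpace.norm_single] using h

lemma diag_norm_le {n : ℕ} (d : Fin n → ℂ) (M : ℝ) (hM : 0 ≤ M) (h : ∀ i, ‖d i‖ ≤ M) :
    ‖Matrix.diagonal d‖ ≤ M := by
  rw [Matrix.l2_opNorm_def]
  refine ContinuousLinearMap.opNorm_le_bound _ hM (fun x => ?_)
  have hx : (Matrix.toEuclideanLin (Matrix.diagonal d)).toContinuousLinearMap x
      = (WithLp.equiv 2 _).symm (Matrix.diagonal d *ᵥ (WithLp.equiv 2 _) x) := by
    simp [Matrix.toEuclideanLin_apply]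
  rw [LinearEquiv.trans_apply, hx, EuclideanSpace.norm_eq, EuclideanSpace.norm_eq]
  have key : ∑ j, ‖((WithLp.equiv 2 ((Fin n) → ℂ)).symm
        (Matrix.diagonal d *ᵥ (WithLp.equiv 2 _) x)) j‖ ^ 2
      ≤ M ^ 2 * ∑ j, ‖x j‖ ^ 2 := by
    rw [Finset.mul_sum]
    refine Finset.sum_le_sum fun j _ => ?_
    have : ‖((WithLp.equiv 2 ((Fin n) → ℂ)).symm
        (Matrix.diagonal d *ᵥ (WithLp.equiv 2 _) x)) j‖ = ‖d j * x j‖ := by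
      simp [Matrix.mulVec_diagonal]
    rw [this, norm_mul, mul_pow]
    exact mul_le_mul_of_nonneg_right (pow_le_pow_left₀ (norm_nonneg _) (h j) 2) (sq_nonneg _)
  calc Real.sqrt (∑ j, ‖((WithLp.equiv 2 ((Fin n) → ℂ)).symm
        (Matrix.diagonal d *ᵥ (WithLp.equiv 2 _) x)) j‖ ^ 2)
      ≤ Real.sqrt (M ^ 2 * ∑ j, ‖x j‖ ^ 2) := Real.sqrt_le_sqrt key
    _ = M * Real.sqrt (∑ j, ‖x j‖ ^ 2) := by
        rw [Real.sqrt_mul (sq_nonneg M), Real.sqrt_sq hM]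

end Aux

/-- Conjugation algebra: `(U D U*) ^ 2` etc. -/
lemma conj_sub_sq {n : ℕ} (U : Matrix.unitaryGroup (Fin n) ℂ) (d : Fin n → ℂ)
    (V : Matrix (Fin n) (Fin n) ℂ) (hV : V = (U : Matrix (Fin n) (Fin n) ℂ) *
      Matrix.diagonal d * star (U : Matrix (Fin n) (Fin n) ℂ)) :
    V - V ^ 2 = (U : Matrix (Fin n) (Fin n) ℂ) *
      Matrix.diagonal (fun i => d i - d i ^ 2) * star (U : Matrix (Fin n) (Fin n) ℂ) := by
  have hsU : star (U : Matrix (Fin n) (Fin n) ℂ) * (U : Matrix (Fin n) (Fin n) ℂ) = 1 :=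
    Unitary.coe_star_mul_self U
  have hsq : V ^ 2 = (U : Matrix (Fin n) (Fin n) ℂ) *
      Matrix.diagonal (fun i => d i ^ 2) * star (U : Matrix (Fin n) (Fin n) ℂ) := by
    rw [sq, hV]
    calc ((U : Matrix (Fin n) (Fin n) ℂ) * Matrix.diagonal d * star (U : Matrix (Fin n) (Fin n) ℂ)) *
        ((U : Matrix (Fin n) (Fin n) ℂ) * Matrix.diagonal d * star (U : Matrix (Fin n) (Fin n) ℂ))
        = (U : Matrix (Fin n) (Fin n) ℂ) * Matrix.diagonal d *
          (star (U : Matrix (Fin n) (Fin n) ℂ) * (U : Matrix (Fin n) (Fin n) ℂ)) *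
          Matrix.diagonal d * star (U : Matrix (Fin n) (Fin n) ℂ) := by
            simp only [mul_assoc]
      _ = (U : Matrix (Fin n) (Fin n) ℂ) * (Matrix.diagonal d * Matrix.diagonal d) *
          star (U : Matrix (Fin n) (Fin n) ℂ) := by rw [hsU]; simp only [mul_one, mul_assoc]
      _ = _ := by rw [Matrix.diagonal_mul_diagonal]; simp [sq]
  rw [hsq, hV, ← Matrix.sub_mul, ← Matrix.mul_sub, ← Matrix.diagonal_sub]

section Main

open scoped Matrix.Norms.L2Operator

theorem Cq_bound {n : ℕ} (f : ℝ → ℝ) (q : ℝ) (hq : 0 < q)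
    (hfc : ContinuousOn f (Icc 0 1)) (hf01 : ∀ x ∈ Icc (0 : ℝ) 1, f x ∈ Icc (0 : ℝ) 1)
    (hlim0 : ∃ L₀ : ℝ, Tendsto (fun x : ℝ => (f x - (f x) ^ 2) / (x - x ^ 2) ^ q)
      (nhdsWithin 0 (Ioi 0)) (nhds L₀))
    (hlim1 : ∃ L₁ : ℝ, Tendsto (fun x : ℝ => (f x - (f x) ^ 2) / (x - x ^ 2) ^ q)
      (nhdsWithin 1 (Iio 1)) (nhds L₁))
    (X : Matrix (Fin n) (Fin n) ℂ) (hX : X.IsHermitian)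
    (hev : ∀ i, hX.eigenvalues i ∈ Icc (0 : ℝ) 1) (hXne : X ≠ X ^ 2) :
    specNorm (hermFun hX f - (hermFun hX f) ^ 2) / (specNorm (X - X ^ 2)) ^ q ≤
      sSup ((fun x : ℝ => (f x - (f x) ^ 2) / (x - x ^ 2) ^ q) '' Ioo 0 1) := by
  classical
  rcases Nat.eq_zero_or_pos n with hn | hn
  · subst hn
    exact absurd (Matrix.ext fun i _ => i.elim0) hXne
  haveI : Nonempty (Fin n) := ⟨⟨0, hn⟩⟩
  obtain ⟨L₀, hL₀⟩ := hlim0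
  obtain ⟨L₁, hL₁⟩ := hlim1
  set R : ℝ → ℝ := fun x => (f x - (f x) ^ 2) / (x - x ^ 2) ^ q with hRdef
  set C : ℝ := sSup (R '' Ioo 0 1) with hCdef
  have hpos : ∀ x ∈ Ioo (0:ℝ) 1, 0 < x - x ^ 2 := by
    intro x hx; nlinarith [hx.1, hx.2]
  have hnumnn : ∀ x ∈ Icc (0:ℝ) 1, 0 ≤ f x - (f x) ^ 2 := by
    intro x hx
    have := hf01 x hx
    nlinarith [this.1, this.2]
  have hRcont : ContinuousOn R (Ioo 0 1) := by
    apply ContinuousOn.div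
    · exact ((hfc.mono Ioo_subset_Icc_self).sub ((hfc.mono Ioo_subset_Icc_self).pow 2))
    · apply ContinuousOn.rpow_const
      · exact (continuousOn_id.sub (continuousOn_id.pow 2))
      · exact fun x hx => Or.inl (ne_of_gt (hpos x hx))
    · exact fun x hx => ne_of_gt (Real.rpow_pos_of_pos (hpos x hx) q)
  -- boundedness of R on (0,1)
  have hbdd : BddAbove (R '' Ioo 0 1) := by
    have h0' : ∀ᶠ x in nhdsWithin (0:ℝ) (Ioi 0), R x < L₀ + 1 :=
      hL₀.eventually_lt_const (lt_add_one L₀)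
    have h1' : ∀ᶠ x in nhdsWithin (1:ℝ) (Iio 1), R x < L₁ + 1 :=
      hL₁.eventually_lt_const (lt_add_one L₁)
    rw [Filter.Eventually, Metric.mem_nhdsWithin_iff] at h0' h1'
    obtain ⟨δ₀, hδ₀, h0'⟩ := h0'
    obtain ⟨δ₁, hδ₁, h1'⟩ := h1'
    set a : ℝ := min (δ₀/2) (1/4) with ha
    set b : ℝ := max (1 - δ₁/2) (3/4) with hb
    have hab : Icc a b ⊆ Ioo (0:ℝ) 1 := by
      intro x hx
      constructor
      · exact lt_of_lt_of_le (lt_min (by linarith) (by norm_num)) hx.1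
      · exact lt_of_le_of_lt hx.2 (max_lt (by linarith) (by norm_num))
    obtain ⟨B, hB⟩ := (isCompact_Icc (a := a) (b := b)).bddAbove_image (hRcont.mono hab)
    refine ⟨max (max (L₀+1) (L₁+1)) B, ?_⟩
    rintro y ⟨x, hx, rfl⟩
    rcases lt_or_ge x a with hxa | hxa
    · have : R x < L₀ + 1 := by
        apply h0' ⟨?_, hx.1⟩
        have : x < δ₀/2 := lt_of_lt_of_le hxa (min_le_left _ _)
        simp only [Metric.mem_ball, Real.dist_eq, sub_zero]
        rw [abs_of_pos hx.1]; linarith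
      exact le_max_of_le_left (le_max_of_le_left this.le)
    rcases lt_or_ge b x with hbx | hbx
    · have : R x < L₁ + 1 := by
        apply h1' ⟨?_, hx.2⟩
        have : 1 - δ₁/2 < x := lt_of_le_of_lt (le_max_left _ _) hbx
        simp only [Metric.mem_ball, Real.dist_eq]
        rw [abs_of_nonpos (by have := hx.2; linarith)]; linarith
      exact le_max_of_le_left (le_max_of_le_right this.le)
    · exact le_max_of_le_right (hB ⟨x, ⟨hxa, hbx⟩, rfl⟩)
  -- endpoint values vanish
  have hmem0 : (0:ℝ) ∈ closure (Ioo (0:ℝ) 1) := by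
    rw [closure_Ioo (by norm_num : (0:ℝ) ≠ 1)]; exact ⟨le_refl 0, by norm_num⟩
  have hmem1 : (1:ℝ) ∈ closure (Ioo (0:ℝ) 1) := by
    rw [closure_Ioo (by norm_num : (0:ℝ) ≠ 1)]; exact ⟨by norm_num, le_refl 1⟩
  haveI hnb0 : (nhdsWithin (0:ℝ) (Ioo 0 1)).NeBot := mem_closure_iff_nhdsWithin_neBot.mp hmem0
  haveI hnb1 : (nhdsWithin (1:ℝ) (Ioo 0 1)).NeBot := mem_closure_iff_nhdsWithin_neBot.mp hmem1
  have hev_mem0 : ∀ᶠ x in nhdsWithin (0:ℝ) (Ioo 0 1), x ∈ Ioo (0:ℝ) 1 :=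
    eventually_mem_nhdsWithin
  have hev_mem1 : ∀ᶠ x in nhdsWithin (1:ℝ) (Ioo 0 1), x ∈ Ioo (0:ℝ) 1 :=
    eventually_mem_nhdsWithin
  have hdenom : ∀ c : ℝ, c ∈ Icc (0:ℝ) 1 →
      Tendsto (fun x : ℝ => (x - x^2) ^ q) (nhdsWithin c (Ioo (0:ℝ) 1)) (nhds ((c - c^2) ^ q)) :=
    by
    intro c hc
    rcases eq_or_ne (c - c^2) 0 with h | h
    · have hx2 : Tendsto (fun x : ℝ => x - x^2) (nhdsWithin c (Ioo (0:ℝ) 1)) (nhds (c - c^2)) := by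
        have hcont : ContinuousAt (fun x : ℝ => x - x^2) c := by fun_prop
        exact hcont.continuousWithinAt.tendsto
      rw [h] at hx2 ⊢
      have hrp : ContinuousAt (fun y : ℝ => y ^ q) 0 := Real.continuousAt_rpow_const 0 q (Or.inr hq.le)
      have := hrp.tendsto.comp hx2
      simpa [Function.comp_def, Real.zero_rpow hq.ne'] using this
    · have hcont : ContinuousAt (fun x : ℝ => (x - x^2) ^ q) c := by
        have hbase : ContinuousAt (fun x : ℝ => x - x^2) c := by fun_prop
        exact hbase.rpow_const (Or.inl h)
      exact hcont.continuousWithinAt.tendsto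
  have hnum_cont : ∀ c : ℝ, c ∈ Icc (0:ℝ) 1 →
      Tendsto (fun x : ℝ => f x - (f x)^2) (nhdsWithin c (Ioo (0:ℝ) 1))
        (nhds (f c - (f c)^2)) := by
    intro c hc
    have hf' : Tendsto f (nhdsWithin c (Ioo 0 1)) (nhds (f c)) :=
      (hfc.continuousWithinAt hc).mono_left (nhdsWithin_mono _ Ioo_subset_Icc_self)
    exact hf'.sub (hf'.pow 2)
  have hprod : ∀ (c L : ℝ) (s : Set ℝ), Ioo (0:ℝ) 1 ⊆ s → c ∈ Icc (0:ℝ) 1 → c - c^2 = 0 →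
      Tendsto R (nhdsWithin c s) (nhds L) →
      (nhdsWithin c (Ioo (0:ℝ) 1)).NeBot → f c - (f c)^2 = 0 := by
    intro c L s hs hc hc2 hL _
    have hRt : Tendsto R (nhdsWithin c (Ioo 0 1)) (nhds L) :=
      hL.mono_left (nhdsWithin_mono _ hs)
    have ht : Tendsto (fun x => R x * (x - x^2) ^ q) (nhdsWithin c (Ioo 0 1))
        (nhds (L * 0)) := by
      have := hRt.mul (hdenom c hc)
      rwa [hc2, Real.zero_rpow hq.ne'] at this
    have heq : ∀ᶠ x in nhdsWithin c (Ioo (0:ℝ) 1),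
        R x * (x - x^2) ^ q = f x - (f x)^2 := by
      filter_upwards [eventually_mem_nhdsWithin] with x hx
      rw [hRdef]
      exact div_mul_cancel₀ _ (ne_of_gt (Real.rpow_pos_of_pos (hpos x hx) q))
    have ht' : Tendsto (fun x => f x - (f x)^2) (nhdsWithin c (Ioo 0 1)) (nhds (L * 0)) :=
      ht.congr' heq
    have := tendsto_nhds_unique ht' (hnum_cont c hc)
    rw [← this, mul_zero]
  have hf0 : f 0 - (f 0)^2 = 0 :=
    hprod 0 L₀ (Ioi 0) (fun x hx => hx.1) ⟨le_refl 0, by norm_num⟩ (by norm_num) hL₀ hnb0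
  have hf1 : f 1 - (f 1)^2 = 0 :=
    hprod 1 L₁ (Iio 1) (fun x hx => hx.2) ⟨by norm_num, le_refl 1⟩ (by norm_num) hL₁ hnb1
  -- C ≥ 0
  have hhalf : (1/2 : ℝ) ∈ Ioo (0:ℝ) 1 := by norm_num
  have hC0 : 0 ≤ C := by
    have hR : 0 ≤ R (1/2) := div_nonneg (hnumnn _ (Ioo_subset_Icc_self hhalf))
      (Real.rpow_nonneg (hpos _ hhalf).le q)
    exact hR.trans (le_csSup hbdd ⟨1/2, hhalf, rfl⟩)
  -- pointwise bound
  have hpt : ∀ x ∈ Icc (0:ℝ) 1, f x - (f x)^2 ≤ C * (x - x^2) ^ q := by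
    intro x hx
    rcases eq_or_lt_of_le hx.1 with h0 | h0
    · rw [← h0, hf0]
      exact mul_nonneg hC0 (Real.rpow_nonneg (by norm_num) q)
    rcases eq_or_lt_of_le hx.2 with h1 | h1
    · rw [h1, hf1]
      exact mul_nonneg hC0 (Real.rpow_nonneg (by norm_num) q)
    · have hxm : x ∈ Ioo (0:ℝ) 1 := ⟨h0, h1⟩
      have hRC : R x ≤ C := le_csSup hbdd ⟨x, hxm, rfl⟩
      rw [hRdef] at hRC
      exact (div_le_iff₀ (Real.rpow_pos_of_pos (hpos x hxm) q)).mp hRC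
  -- matrix side
  set U := hX.eigenvectorUnitary with hU
  set lam := hX.eigenvalues with hlam
  have h1 := conj_sub_sq U ((RCLike.ofReal ∘ lam : Fin n → ℂ)) X hX.spectral_theorem
  have h2 := conj_sub_sq U (fun i => (f (lam i) : ℂ)) (hermFun hX f) rfl
  have hnorm1 : specNorm (X - X ^ 2)
      = ‖Matrix.diagonal (fun i => (RCLike.ofReal ∘ lam : Fin n → ℂ) i - ((RCLike.ofReal ∘ lam : Fin n → ℂ) i) ^ 2)‖ := by
    rw [specNorm_eq, h1, unitary_conj_norm]
  have hnorm2 : specNorm (hermFun hX f - (hermFun hX f) ^ 2)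
      = ‖Matrix.diagonal (fun i => ((f (lam i) : ℂ)) - ((f (lam i) : ℂ)) ^ 2)‖ := by
    rw [specNorm_eq, h2, unitary_conj_norm]
  have hent1 : ∀ i, ‖(RCLike.ofReal ∘ lam : Fin n → ℂ) i - ((RCLike.ofReal ∘ lam : Fin n → ℂ) i) ^ 2‖
      = lam i - (lam i) ^ 2 := by
    intro i
    have : (RCLike.ofReal ∘ lam : Fin n → ℂ) i - ((RCLike.ofReal ∘ lam : Fin n → ℂ) i) ^ 2
        = ((lam i - (lam i) ^ 2 : ℝ) : ℂ) := by
      simp only [Function.comp]; push_cast; rfl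
    rw [this, Complex.norm_real,
      Real.norm_of_nonneg (by nlinarith [(hev i).1, (hev i).2] : (0:ℝ) ≤ lam i - (lam i) ^ 2)]
  have hent2 : ∀ i, ‖((f (lam i) : ℂ)) - ((f (lam i) : ℂ)) ^ 2‖
      = f (lam i) - (f (lam i)) ^ 2 := by
    intro i
    have : ((f (lam i) : ℂ)) - ((f (lam i) : ℂ)) ^ 2
        = ((f (lam i) - (f (lam i)) ^ 2 : ℝ) : ℂ) := by push_cast; ring
    rw [this, Complex.norm_real, Real.norm_of_nonneg (hnumnn _ (hev i))]
  set M := specNorm (X - X ^ 2) with hM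
  have hMpos : 0 < M := by
    rw [hM, specNorm_eq]
    exact norm_pos_iff.mpr (sub_ne_zero.mpr hXne)
  have hMi : ∀ i, lam i - (lam i) ^ 2 ≤ M := by
    intro i
    rw [hnorm1, ← hent1 i]
    exact diag_norm_ge (fun j => (RCLike.ofReal ∘ lam : Fin n → ℂ) j - ((RCLike.ofReal ∘ lam : Fin n → ℂ) j) ^ 2) i
  have hNle : specNorm (hermFun hX f - (hermFun hX f) ^ 2) ≤ C * M ^ q := by
    rw [hnorm2]
    apply diag_norm_le _ _ (mul_nonneg hC0 (Real.rpow_nonneg hMpos.le q))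
    intro i
    rw [hent2 i]
    calc f (lam i) - (f (lam i)) ^ 2 ≤ C * (lam i - (lam i) ^ 2) ^ q := hpt _ (hev i)
      _ ≤ C * M ^ q := by
          apply mul_le_mul_of_nonneg_left _ hC0
          apply Real.rpow_le_rpow _ (hMi i) hq.le
          nlinarith [(hev i).1, (hev i).2]
  rw [div_le_iff₀ (Real.rpow_pos_of_pos hMpos q)]
  exact hNle

end Main
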